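/- In the q-rook monoid algebra R_k(q) with k ≥ 2, setting X_1 = 1 − P_1, we have the commutation relation X_1 T_1 X_1 T_1 = T_1 X_1 T_1 X_1. -/
import Mathlib


/-- In the q-rook monoid algebra `R_k(q)` with `k ≥ 2`, setting `X_1 = 1 - P_1`,
we have `X_1 T_1 X_1 T_1 = T_1 X_1 T_1 X_1`. -/
theorem stmt3 {A : Type*} [Ring A] [Algebra ℂ A] (k : ℕ) (hk : 2 ≤ k) (q : ℂ) (hq : q ≠ 0)
    (T P : ℕ → A)
    (hA1 : ∀ i, 1 ≤ i → i + 1 ≤ k → T i * T i = (q - q⁻¹) • T i + 1)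
    (hA2 : ∀ i, 1 ≤ i → i + 2 ≤ k → T i * T (i+1) * T i = T (i+1) * T i * T (i+1))
    (hA3 : ∀ i j, 1 ≤ i → i + 1 < j → j + 1 ≤ k → T i * T j = T j * T i)
    (hR1 : ∀ i, 1 ≤ i → i ≤ k → P i * P i = P i)
    (hR2 : ∀ i j, 1 ≤ i → i ≤ k → 1 ≤ j → j ≤ k → P i * P j = P j * P i)
    (hR3 : ∀ i j, 1 ≤ i → i < j → j + 1 ≤ k → P i * T j = T j * P i)
    (hR4 : ∀ i j, 1 ≤ j → j < i → i ≤ k → P i * T j = q • P i ∧ T j * P i = q • P i)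
    (hR5 : ∀ i, 1 ≤ i → i + 1 ≤ k → P (i+1) = q • (P i * T i * P i - (q - q⁻¹) • P i)) :
    ∀ X1 : A, X1 = 1 - P 1 →
      X1 * T 1 * X1 * T 1 = T 1 * X1 * T 1 * X1 := by
  intro X1 hX
  subst hX
  have hT : T 1 * T 1 = (q - q⁻¹) • T 1 + 1 := hA1 1 le_rfl hk
  have h5 : P 2 = q • (P 1 * T 1 * P 1 - (q - q⁻¹) • P 1) := hR5 1 le_rfl hk
  obtain ⟨h4a, h4b⟩ := hR4 2 1 le_rfl one_lt_two hk
  rw [h5] at h4a h4b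
  rw [smul_mul_assoc] at h4a
  rw [mul_smul_comm] at h4b
  have cancel : ∀ x y : A, q • x = q • y → x = y := fun x y h => by
    have h2 := congrArg (q⁻¹ • ·) h
    simpa [smul_smul, inv_mul_cancel₀ hq] using h2
  have key1 : (P 1 * T 1 * P 1 - (q - q⁻¹) • P 1) * T 1
      = q • (P 1 * T 1 * P 1 - (q - q⁻¹) • P 1) := cancel _ _ h4a
  have key2 : T 1 * (P 1 * T 1 * P 1 - (q - q⁻¹) • P 1)
      = q • (P 1 * T 1 * P 1 - (q - q⁻¹) • P 1) := cancel _ _ h4b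
  have keyc := key1.trans key2.symm
  simp only [sub_mul, mul_sub, smul_mul_assoc, mul_smul_comm] at keyc
  have main : (1 - P 1) * T 1 * (1 - P 1) * T 1 - T 1 * (1 - P 1) * T 1 * (1 - P 1)
      = ((T 1 * T 1) * P 1 - P 1 * (T 1 * T 1))
        + (P 1 * T 1 * P 1 * T 1 - T 1 * (P 1 * T 1 * P 1)) := by
    noncomm_ring
  have e1 : (T 1 * T 1) * P 1 - P 1 * (T 1 * T 1)
      = (q - q⁻¹) • (T 1 * P 1) - (q - q⁻¹) • (P 1 * T 1) := by
    rw [hT]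
    simp only [add_mul, mul_add, one_mul, mul_one, smul_mul_assoc, mul_smul_comm]
    abel
  have e2 : P 1 * T 1 * P 1 * T 1 - T 1 * (P 1 * T 1 * P 1)
      = (q - q⁻¹) • (P 1 * T 1) - (q - q⁻¹) • (T 1 * P 1) := by
    rw [sub_eq_sub_iff_sub_eq_sub]
    exact keyc
  have hz : (1 - P 1) * T 1 * (1 - P 1) * T 1 - T 1 * (1 - P 1) * T 1 * (1 - P 1) = 0 := by
    rw [main, e1, e2]; abel
  exact sub_eq_zero.mp hz
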